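/- Let (R, R', M, M', τ, τ') be a Morita context with s-unital R and R', surjective τ, τ', M'R = R'M' = M' and MR' = RM = M. Then the linking algebra C has multipliers u, v with uv = e₁₁ and vu = e₂₂ if and only if there exist a left R-module isomorphism ψ : R → M and a right R'-module isomorphism ψ' : R' → M such that (rψ)r' = r(ψ'r') for all r ∈ R, r' ∈ R'. -/
import Mathlib


/-- A Morita context `(R, R', M, M', τ, τ')` between (non-necessarily unital)
rings `R` and `R'`:  `M` is an `(R,R')`-bimodule, `M'` an `(R',R)`-bimodule,
and `p`/`p'` are the balanced biadditive pairings induced by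
`τ : M ⊗_{R'} M' → R` and `τ' : M' ⊗_R M → R'`, satisfying the mixed
associativity conditions. -/
structure MoritaContext (R R' M M' : Type) [NonUnitalRing R] [NonUnitalRing R']
    [AddCommGroup M] [AddCommGroup M'] where
  sRM : R → M → M
  sMR : M → R' → M
  sRM' : R' → M' → M'
  sMR' : M' → R → M'
  p : M → M' → R
  p' : M' → M → R'
  sRM_add_left : ∀ (r s : R) (m : M), sRM (r + s) m = sRM r m + sRM s m
  sRM_add_right : ∀ (r : R) (m n : M), sRM r (m + n) = sRM r m + sRM r n
  sMR_add_left : ∀ (m n : M) (r' : R'), sMR (m + n) r' = sMR m r' + sMR n r'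
  sMR_add_right : ∀ (m : M) (r' s' : R'), sMR m (r' + s') = sMR m r' + sMR m s'
  sRM'_add_left : ∀ (r' s' : R') (m' : M'), sRM' (r' + s') m' = sRM' r' m' + sRM' s' m'
  sRM'_add_right : ∀ (r' : R') (m' n' : M'), sRM' r' (m' + n') = sRM' r' m' + sRM' r' n'
  sMR'_add_left : ∀ (m' n' : M') (r : R), sMR' (m' + n') r = sMR' m' r + sMR' n' r
  sMR'_add_right : ∀ (m' : M') (r s : R), sMR' m' (r + s) = sMR' m' r + sMR' m' s
  p_add_left : ∀ (m n : M) (m' : M'), p (m + n) m' = p m m' + p n m'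
  p_add_right : ∀ (m : M) (m' n' : M'), p m (m' + n') = p m m' + p m n'
  p'_add_left : ∀ (m' n' : M') (m : M), p' (m' + n') m = p' m' m + p' n' m
  p'_add_right : ∀ (m' : M') (m n : M), p' m' (m + n) = p' m' m + p' m' n
  sRM_mul : ∀ (r s : R) (m : M), sRM (r * s) m = sRM r (sRM s m)
  sMR_mul : ∀ (m : M) (r' s' : R'), sMR (sMR m r') s' = sMR m (r' * s')
  bimod_M : ∀ (r : R) (m : M) (r' : R'), sMR (sRM r m) r' = sRM r (sMR m r')
  sRM'_mul : ∀ (r' s' : R') (m' : M'), sRM' (r' * s') m' = sRM' r' (sRM' s' m')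
  sMR'_mul : ∀ (m' : M') (r s : R), sMR' (sMR' m' r) s = sMR' m' (r * s)
  bimod_M' : ∀ (r' : R') (m' : M') (r : R), sMR' (sRM' r' m') r = sRM' r' (sMR' m' r)
  p_left : ∀ (r : R) (m : M) (m' : M'), p (sRM r m) m' = r * p m m'
  p_right : ∀ (m : M) (m' : M') (r : R), p m (sMR' m' r) = p m m' * r
  p_balanced : ∀ (m : M) (r' : R') (m' : M'), p (sMR m r') m' = p m (sRM' r' m')
  p'_left : ∀ (r' : R') (m' : M') (m : M), p' (sRM' r' m') m = r' * p' m' m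
  p'_right : ∀ (m' : M') (m : M) (r' : R'), p' m' (sMR m r') = p' m' m * r'
  p'_balanced : ∀ (m' : M') (r : R) (m : M), p' (sMR' m' r) m = p' m' (sRM r m)
  assoc₁ : ∀ (m₁ : M) (m' : M') (m₂ : M), sRM (p m₁ m') m₂ = sMR m₁ (p' m' m₂)
  assoc₂ : ∀ (m'₁ : M') (m : M) (m'₂ : M'), sRM' (p' m'₁ m) m'₂ = sMR' m'₁ (p m m'₂)

variable {R R' M M' : Type} [NonUnitalRing R] [NonUnitalRing R']
  [AddCommGroup M] [AddCommGroup M']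

/-- The multiplication of the linking algebra `C = [[R, M], [M', R']]` of a
Morita context, an element `[[r, m], [m', r']]` being encoded as the tuple
`(r, m, m', r')`. -/
def lmul (c : MoritaContext R R' M M') (x y : R × M × M' × R') : R × M × M' × R' :=
  (x.1 * y.1 + c.p x.2.1 y.2.2.1,
   c.sRM x.1 y.2.1 + c.sMR x.2.1 y.2.2.2,
   c.sMR' x.2.2.1 y.1 + c.sRM' x.2.2.2 y.2.2.1,
   c.p' x.2.2.1 y.2.1 + x.2.2.2 * y.2.2.2)

/-- A multiplier `(L, Rm)` of the linking algebra `C` of a Morita context. -/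
structure CMult (c : MoritaContext R R' M M') where
  L : R × M × M' × R' → R × M × M' × R'
  Rm : R × M × M' × R' → R × M × M' × R'
  L_add : ∀ x y, L (x + y) = L x + L y
  R_add : ∀ x y, Rm (x + y) = Rm x + Rm y
  L_mul : ∀ x y, L (lmul c x y) = lmul c (L x) y
  R_mul : ∀ x y, Rm (lmul c x y) = lmul c x (Rm y)
  compat : ∀ x y, lmul c (Rm x) y = lmul c x (L y)

/-- Left action of the corner multiplier `e₁₁` on the linking algebra. -/
def e11L (x : R × M × M' × R') : R × M × M' × R' := (x.1, x.2.1, 0, 0)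

/-- Right action of the corner multiplier `e₁₁` on the linking algebra. -/
def e11R (x : R × M × M' × R') : R × M × M' × R' := (x.1, 0, x.2.2.1, 0)

/-- Left action of the corner multiplier `e₂₂` on the linking algebra. -/
def e22L (x : R × M × M' × R') : R × M × M' × R' := (0, 0, x.2.2.1, x.2.2.2)

/-- Right action of the corner multiplier `e₂₂` on the linking algebra. -/
def e22R (x : R × M × M' × R') : R × M × M' × R' := (0, x.2.1, 0, x.2.2.2)

/-- `u·v = e₁₁` and `v·u = e₂₂` in the multiplier algebra of the linking
algebra (recall `L_{uv} = L_u ∘ L_v` and `R_{uv} = R_v ∘ R_u`). -/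
def CornerUV (c : MoritaContext R R' M M') (u v : CMult c) : Prop :=
  (∀ x, u.L (v.L x) = e11L x) ∧ (∀ x, v.Rm (u.Rm x) = e11R x) ∧
  (∀ x, v.L (u.L x) = e22L x) ∧ (∀ x, u.Rm (v.Rm x) = e22R x)

/-- The linking algebra is idempotent: `C·C = C`. -/
def LinkIdem (c : MoritaContext R R' M M') : Prop :=
  AddSubgroup.closure
    (Set.image2 (lmul c) (Set.univ : Set (R × M × M' × R')) Set.univ) = ⊤


section Helpers

theorem MA_addf_zero {A B : Type} [AddGroup A] [AddGroup B] {f : A → B}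
    (h : ∀ x y, f (x + y) = f x + f y) : f 0 = 0 := by
  have h0 := h 0 0
  rw [add_zero] at h0
  exact (left_eq_add.mp h0)

theorem MA_addf_neg {A B : Type} [AddGroup A] [AddGroup B] {f : A → B}
    (h : ∀ x y, f (x + y) = f x + f y) (a : A) : f (-a) = -f a := by
  have h1 : f a + f (-a) = 0 := by
    rw [← h]
    simp [MA_addf_zero h]
  exact (neg_eq_of_add_eq_zero_right h1).symm

theorem MA_top_induction {G : Type} [AddCommGroup G] {k : Set G}
    (hk : AddSubgroup.closure k = ⊤) {P : G → Prop}
    (mem : ∀ x ∈ k, P x) (zero : P 0)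
    (add : ∀ x y, P x → P y → P (x + y)) (neg : ∀ x, P x → P (-x)) (x : G) : P x := by
  let S : AddSubgroup G :=
    { carrier := setOf P
      add_mem' := fun hx hy => add _ _ hx hy
      zero_mem' := zero
      neg_mem' := fun hx => neg _ hx }
  have h1 : AddSubgroup.closure k ≤ S := (AddSubgroup.closure_le S).mpr mem
  have h2 : x ∈ S := h1 (by rw [hk]; trivial)
  exact h2

end Helpers

section ZeroLemmas

variable (c : MoritaContext R R' M M')

theorem MA_sRM_zl (m : M) : c.sRM 0 m = 0 :=
  MA_addf_zero (f := fun r => c.sRM r m) (fun x y => c.sRM_add_left x y m)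
theorem MA_sRM_zr (r : R) : c.sRM r 0 = 0 :=
  MA_addf_zero (f := fun m => c.sRM r m) (fun x y => c.sRM_add_right r x y)
theorem MA_sMR_zl (r' : R') : c.sMR 0 r' = 0 :=
  MA_addf_zero (f := fun m => c.sMR m r') (fun x y => c.sMR_add_left x y r')
theorem MA_sMR_zr (m : M) : c.sMR m 0 = 0 :=
  MA_addf_zero (f := fun r' => c.sMR m r') (fun x y => c.sMR_add_right m x y)
theorem MA_sRM'_zl (m' : M') : c.sRM' 0 m' = 0 :=
  MA_addf_zero (f := fun r' => c.sRM' r' m') (fun x y => c.sRM'_add_left x y m')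
theorem MA_sRM'_zr (r' : R') : c.sRM' r' 0 = 0 :=
  MA_addf_zero (f := fun m' => c.sRM' r' m') (fun x y => c.sRM'_add_right r' x y)
theorem MA_sMR'_zl (r : R) : c.sMR' 0 r = 0 :=
  MA_addf_zero (f := fun m' => c.sMR' m' r) (fun x y => c.sMR'_add_left x y r)
theorem MA_sMR'_zr (m' : M') : c.sMR' m' 0 = 0 :=
  MA_addf_zero (f := fun r => c.sMR' m' r) (fun x y => c.sMR'_add_right m' x y)
theorem MA_p_zl (m' : M') : c.p 0 m' = 0 :=
  MA_addf_zero (f := fun m => c.p m m') (fun x y => c.p_add_left x y m')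
theorem MA_p_zr (m : M) : c.p m 0 = 0 :=
  MA_addf_zero (f := fun m' => c.p m m') (fun x y => c.p_add_right m x y)
theorem MA_p'_zl (m : M) : c.p' 0 m = 0 :=
  MA_addf_zero (f := fun m' => c.p' m' m) (fun x y => c.p'_add_left x y m)
theorem MA_p'_zr (m' : M') : c.p' m' 0 = 0 :=
  MA_addf_zero (f := fun m => c.p' m' m) (fun x y => c.p'_add_right m' x y)

theorem MA_sRM_nl (r : R) (m : M) : c.sRM (-r) m = -c.sRM r m :=
  MA_addf_neg (f := fun r => c.sRM r m) (fun x y => c.sRM_add_left x y m) r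
theorem MA_sRM_nr (r : R) (m : M) : c.sRM r (-m) = -c.sRM r m :=
  MA_addf_neg (f := fun m => c.sRM r m) (fun x y => c.sRM_add_right r x y) m
theorem MA_sMR_nl (m : M) (r' : R') : c.sMR (-m) r' = -c.sMR m r' :=
  MA_addf_neg (f := fun m => c.sMR m r') (fun x y => c.sMR_add_left x y r') m
theorem MA_sMR_nr (m : M) (r' : R') : c.sMR m (-r') = -c.sMR m r' :=
  MA_addf_neg (f := fun r' => c.sMR m r') (fun x y => c.sMR_add_right m x y) r'
theorem MA_sRM'_nl (r' : R') (m' : M') : c.sRM' (-r') m' = -c.sRM' r' m' :=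
  MA_addf_neg (f := fun r' => c.sRM' r' m') (fun x y => c.sRM'_add_left x y m') r'
theorem MA_sRM'_nr (r' : R') (m' : M') : c.sRM' r' (-m') = -c.sRM' r' m' :=
  MA_addf_neg (f := fun m' => c.sRM' r' m') (fun x y => c.sRM'_add_right r' x y) m'
theorem MA_sMR'_nl (m' : M') (r : R) : c.sMR' (-m') r = -c.sMR' m' r :=
  MA_addf_neg (f := fun m' => c.sMR' m' r) (fun x y => c.sMR'_add_left x y r) m'
theorem MA_sMR'_nr (m' : M') (r : R) : c.sMR' m' (-r) = -c.sMR' m' r :=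
  MA_addf_neg (f := fun r => c.sMR' m' r) (fun x y => c.sMR'_add_right m' x y) r
theorem MA_p_nl (m : M) (m' : M') : c.p (-m) m' = -c.p m m' :=
  MA_addf_neg (f := fun m => c.p m m') (fun x y => c.p_add_left x y m') m
theorem MA_p_nr (m : M) (m' : M') : c.p m (-m') = -c.p m m' :=
  MA_addf_neg (f := fun m' => c.p m m') (fun x y => c.p_add_right m x y) m'
theorem MA_p'_nl (m' : M') (m : M) : c.p' (-m') m = -c.p' m' m :=
  MA_addf_neg (f := fun m' => c.p' m' m) (fun x y => c.p'_add_left x y m) m'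
theorem MA_p'_nr (m' : M') (m : M) : c.p' m' (-m) = -c.p' m' m :=
  MA_addf_neg (f := fun m => c.p' m' m) (fun x y => c.p'_add_right m' x y) m

end ZeroLemmas

section Units

variable (c : MoritaContext R R' M M')

/-- Every element of `M'` has a right local unit from `R`. -/
theorem MA_M'_unit_right (hRr : ∀ r : R, ∃ y : R, r * y = r)
    (hM'R : AddSubgroup.closure {x : M' | ∃ m' r, x = c.sMR' m' r} = ⊤) (w : M') :
    ∃ e : R, c.sMR' w e = w := by
  refine MA_top_induction (P := fun w => ∃ e : R, c.sMR' w e = w) hM'R ?_ ?_ ?_ ?_ w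
  · rintro x ⟨m', r, rfl⟩
    obtain ⟨y, hy⟩ := hRr r
    exact ⟨y, by rw [c.sMR'_mul, hy]⟩
  · exact ⟨0, MA_sMR'_zl c 0⟩
  · rintro x y ⟨e₁, he₁⟩ ⟨e₂, he₂⟩
    obtain ⟨g, hg⟩ := hRr (e₂ - e₂ * e₁)
    refine ⟨e₁ + (g - e₁ * g), ?_⟩
    have hsub : ∀ (w : M') (a b : R), c.sMR' w (a - b) = c.sMR' w a - c.sMR' w b := by
      intro w a b
      rw [sub_eq_add_neg, c.sMR'_add_right, MA_sMR'_nr, sub_eq_add_neg]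
    have hx : c.sMR' x (e₁ + (g - e₁ * g)) = x := by
      rw [c.sMR'_add_right, he₁, hsub, ← c.sMR'_mul, he₁]
      abel
    have hy2 : c.sMR' y (e₁ + (g - e₁ * g)) = y := by
      have key : c.sMR' y (e₂ - e₂ * e₁) = y - c.sMR' y e₁ := by
        rw [hsub, he₂, ← c.sMR'_mul, he₂]
      have key2 : c.sMR' y (g - e₁ * g) = y - c.sMR' y e₁ := by
        have h3 : c.sMR' (y - c.sMR' y e₁) g = y - c.sMR' y e₁ := by
          rw [← key, c.sMR'_mul, hg]
        calc c.sMR' y (g - e₁ * g) = c.sMR' y g - c.sMR' y (e₁ * g) := hsub _ _ _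
          _ = c.sMR' y g - c.sMR' (c.sMR' y e₁) g := by rw [c.sMR'_mul]
          _ = c.sMR' (y - c.sMR' y e₁) g := by
              rw [sub_eq_add_neg, sub_eq_add_neg, c.sMR'_add_left, MA_sMR'_nl]
          _ = y - c.sMR' y e₁ := h3
      rw [c.sMR'_add_right, key2]
      abel
    rw [c.sMR'_add_left, hx, hy2]
  · rintro x ⟨e, he⟩
    exact ⟨e, by rw [MA_sMR'_nl, he]⟩

end Units

section Reverse

theorem MA_reverse (c : MoritaContext R R' M M')
    (hRl : ∀ r : R, ∃ y : R, y * r = r) (hRr : ∀ r : R, ∃ y : R, r * y = r)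
    (hR'r : ∀ r' : R', ∃ y : R', r' * y = r')
    (hτ : AddSubgroup.closure {x : R | ∃ m m', x = c.p m m'} = ⊤)
    (hτ' : AddSubgroup.closure {x : R' | ∃ m' m, x = c.p' m' m} = ⊤)
    (hM'R : AddSubgroup.closure {x : M' | ∃ m' r, x = c.sMR' m' r} = ⊤)
    (hR'M' : AddSubgroup.closure {x : M' | ∃ r' m', x = c.sRM' r' m'} = ⊤)
    (ψ : R → M) (ψ' : R' → M)
    (hψ : Function.Bijective ψ) (hψ' : Function.Bijective ψ')
    (ψadd : ∀ r s : R, ψ (r + s) = ψ r + ψ s)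
    (ψ'add : ∀ r' s' : R', ψ' (r' + s') = ψ' r' + ψ' s')
    (ψmul : ∀ r s : R, ψ (r * s) = c.sRM r (ψ s))
    (ψ'mul : ∀ r' s' : R', ψ' (r' * s') = c.sMR (ψ' r') s')
    (hcomp : ∀ (r : R) (r' : R'), c.sMR (ψ r) r' = c.sRM r (ψ' r')) :
    ∃ u v : CMult c, CornerUV c u v := by
  obtain ⟨ψi, hψi1, hψi2⟩ := Function.bijective_iff_has_inverse.mp hψ
  obtain ⟨ψ'i, hψ'i1, hψ'i2⟩ := Function.bijective_iff_has_inverse.mp hψ'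
  have ψ0 : ψ 0 = 0 := MA_addf_zero ψadd
  have ψ'0 : ψ' 0 = 0 := MA_addf_zero ψ'add
  have ψneg : ∀ r, ψ (-r) = -ψ r := MA_addf_neg ψadd
  have ψ'neg : ∀ r', ψ' (-r') = -ψ' r' := MA_addf_neg ψ'add
  have ψiadd : ∀ m n, ψi (m + n) = ψi m + ψi n := by
    intro m n; apply hψ.1; rw [hψi2, ψadd, hψi2, hψi2]
  have ψ'iadd : ∀ m n, ψ'i (m + n) = ψ'i m + ψ'i n := by
    intro m n; apply hψ'.1; rw [hψ'i2, ψ'add, hψ'i2, hψ'i2]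
  have ψi0 : ψi 0 = 0 := by apply hψ.1; rw [hψi2, ψ0]
  have ψ'i0 : ψ'i 0 = 0 := by apply hψ'.1; rw [hψ'i2, ψ'0]
  have ψineg : ∀ m, ψi (-m) = -ψi m := MA_addf_neg ψiadd
  have ψ'ineg : ∀ m, ψ'i (-m) = -ψ'i m := MA_addf_neg ψ'iadd
  have ψi_sRM : ∀ r m, ψi (c.sRM r m) = r * ψi m := by
    intro r m; apply hψ.1; rw [hψi2, ψmul, hψi2]
  have ψ'i_sMR : ∀ m r', ψ'i (c.sMR m r') = ψ'i m * r' := by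
    intro m r'; apply hψ'.1; rw [hψ'i2, ψ'mul, hψ'i2]
  have F2 : ∀ (a : M) (m : M), c.sRM (ψi a) m = c.sMR a (ψ'i m) := by
    intro a m
    conv_lhs => rw [← hψ'i2 m]
    rw [← hcomp, hψi2]
  -- faithfulness lemmas
  have fR : ∀ x : R, (∀ s, s * x = 0) → x = 0 := by
    intro x hx; obtain ⟨y, hy⟩ := hRl x; rw [← hy]; exact hx y
  have fRr : ∀ x : R, (∀ s, x * s = 0) → x = 0 := by
    intro x hx; obtain ⟨y, hy⟩ := hRr x; rw [← hy]; exact hx y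
  have fR' : ∀ x' : R', (∀ s', x' * s' = 0) → x' = 0 := by
    intro x hx; obtain ⟨y, hy⟩ := hR'r x; rw [← hy]; exact hx y
  have fM' : ∀ w : M', (∀ m, c.p' w m = 0) → w = 0 := by
    intro w hw
    have h1 : ∀ r, c.sMR' w r = 0 := by
      refine MA_top_induction (P := fun r => c.sMR' w r = 0) hτ ?_ (MA_sMR'_zr c w) ?_ ?_
      · rintro x ⟨m, m', rfl⟩
        rw [← c.assoc₂, hw, MA_sRM'_zl]
      · intro a b ha hb; rw [c.sMR'_add_right, ha, hb, add_zero]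
      · intro a ha; rw [MA_sMR'_nr, ha, neg_zero]
    obtain ⟨e, he⟩ := MA_M'_unit_right c hRr hM'R w
    rw [← he, h1]
  have fMl : ∀ z : M, (∀ s, c.sRM s z = 0) → z = 0 := by
    intro z hz
    obtain ⟨t, ht⟩ := hψ.2 z
    have hts : ∀ s, s * t = 0 := fun s => hψ.1 (by rw [ψmul, ht, hz, ψ0])
    rw [← ht, fR t hts, ψ0]
  have fRM : ∀ x : R, (∀ m, c.sRM x m = 0) → x = 0 := by
    intro x hx
    exact fRr x (fun t => hψ.1 (by rw [ψmul, hx, ψ0]))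
  -- the map γ  (left action "ψ·m'" on R)
  have hγ : ∀ m' : M', ∃! x : R, ∀ s, s * x = c.p (ψ s) m' := by
    intro m'
    have hex : ∃ x : R, ∀ s, s * x = c.p (ψ s) m' := by
      refine MA_top_induction
        (P := fun m' => ∃ x : R, ∀ s, s * x = c.p (ψ s) m') hR'M' ?_ ?_ ?_ ?_ m'
      · rintro w ⟨r', n', rfl⟩
        refine ⟨c.p (ψ' r') n', fun s => ?_⟩
        rw [← c.p_left, ← hcomp, c.p_balanced]
      · exact ⟨0, fun s => by rw [mul_zero, MA_p_zr]⟩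
      · rintro a b ⟨x₁, h₁⟩ ⟨x₂, h₂⟩
        exact ⟨x₁ + x₂, fun s => by rw [mul_add, h₁, h₂, c.p_add_right]⟩
      · rintro a ⟨x, h⟩
        exact ⟨-x, fun s => by rw [mul_neg, h, MA_p_nr]⟩
    obtain ⟨x, hx⟩ := hex
    refine ⟨x, hx, fun y hy => ?_⟩
    exact sub_eq_zero.mp (fR _ (fun s => by rw [mul_sub, hx, hy, sub_self]))
  choose γ hγc using hγ
  have γdef : ∀ m' s, s * γ m' = c.p (ψ s) m' := fun m' => (hγc m').1
  have γuniq : ∀ (m' : M') (y : R), (∀ s, s * y = c.p (ψ s) m') → y = γ m' :=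
    fun m' => (hγc m').2
  have γadd : ∀ a b, γ (a + b) = γ a + γ b := fun a b =>
    (γuniq _ _ (fun s => by rw [mul_add, γdef, γdef, c.p_add_right])).symm
  -- the map κ  ("m'·ψ" in R')
  have hκ : ∀ m' : M', ∃! x' : R', ∀ s', x' * s' = c.p' m' (ψ' s') := by
    intro m'
    have hex : ∃ x' : R', ∀ s', x' * s' = c.p' m' (ψ' s') := by
      refine MA_top_induction
        (P := fun m' => ∃ x' : R', ∀ s', x' * s' = c.p' m' (ψ' s')) hM'R ?_ ?_ ?_ ?_ m'
      · rintro w ⟨n', r, rfl⟩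
        refine ⟨c.p' n' (ψ r), fun s' => ?_⟩
        rw [c.p'_balanced, ← hcomp, c.p'_right]
      · exact ⟨0, fun s' => by rw [zero_mul, MA_p'_zl]⟩
      · rintro a b ⟨x₁, h₁⟩ ⟨x₂, h₂⟩
        exact ⟨x₁ + x₂, fun s' => by rw [add_mul, h₁, h₂, c.p'_add_left]⟩
      · rintro a ⟨x, h⟩
        exact ⟨-x, fun s' => by rw [neg_mul, h, MA_p'_nl]⟩
    obtain ⟨x, hx⟩ := hex
    refine ⟨x, hx, fun y hy => ?_⟩
    exact sub_eq_zero.mp (fR' _ (fun s' => by rw [sub_mul, hx, hy, sub_self]))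
  choose κ hκc using hκ
  have κdef : ∀ m' s', κ m' * s' = c.p' m' (ψ' s') := fun m' => (hκc m').1
  have κuniq : ∀ (m' : M') (y : R'), (∀ s', y * s' = c.p' m' (ψ' s')) → y = κ m' :=
    fun m' => (hκc m').2
  have κadd : ∀ a b, κ (a + b) = κ a + κ b := fun a b =>
    (κuniq _ _ (fun s' => by rw [add_mul, κdef, κdef, c.p'_add_left])).symm
  have κ0 : κ 0 = 0 :=
    ((κuniq 0 0 (fun s' => by rw [zero_mul, MA_p'_zl]))).symm
  have κneg : ∀ m', κ (-m') = -κ m' := MA_addf_neg κadd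
  -- the map α  ("n·r" in M')
  have hα : ∀ r : R, ∃! w : M', ∀ m, c.p' w m = ψ'i (c.sRM r m) := by
    intro r
    have hex : ∃ w : M', ∀ m, c.p' w m = ψ'i (c.sRM r m) := by
      refine MA_top_induction
        (P := fun r => ∃ w : M', ∀ m, c.p' w m = ψ'i (c.sRM r m)) hτ ?_ ?_ ?_ ?_ r
      · rintro x ⟨a, a', rfl⟩
        refine ⟨c.sRM' (ψ'i a) a', fun m => ?_⟩
        rw [c.p'_left, c.assoc₁, ψ'i_sMR]
      · exact ⟨0, fun m => by rw [MA_p'_zl, MA_sRM_zl, ψ'i0]⟩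
      · rintro a b ⟨w₁, h₁⟩ ⟨w₂, h₂⟩
        exact ⟨w₁ + w₂, fun m => by rw [c.p'_add_left, h₁, h₂, c.sRM_add_left, ψ'iadd]⟩
      · rintro a ⟨w, h⟩
        exact ⟨-w, fun m => by rw [MA_p'_nl, h, MA_sRM_nl, ψ'ineg]⟩
    obtain ⟨w, hw⟩ := hex
    refine ⟨w, hw, fun y hy => ?_⟩
    refine sub_eq_zero.mp (fM' _ (fun m => ?_))
    rw [sub_eq_add_neg, c.p'_add_left, MA_p'_nl, hy, hw]
    abel
  choose α hαc using hα
  have αdef : ∀ r m, c.p' (α r) m = ψ'i (c.sRM r m) := fun r => (hαc r).1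
  have αuniq : ∀ (r : R) (w : M'), (∀ m, c.p' w m = ψ'i (c.sRM r m)) → w = α r :=
    fun r => (hαc r).2
  have αadd : ∀ a b, α (a + b) = α a + α b := fun a b =>
    (αuniq _ _ (fun m => by rw [c.p'_add_left, αdef, αdef, c.sRM_add_left, ψ'iadd])).symm
  -- the map ε  ("r'·n" in M')
  have hε : ∀ r' : R', ∃! w : M', ∀ m, c.p' w m = r' * ψ'i m := by
    intro r'
    have hex : ∃ w : M', ∀ m, c.p' w m = r' * ψ'i m := by
      refine MA_top_induction
        (P := fun r' => ∃ w : M', ∀ m, c.p' w m = r' * ψ'i m) hτ' ?_ ?_ ?_ ?_ r'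
      · rintro x ⟨a', a, rfl⟩
        refine ⟨c.sMR' a' (ψi a), fun m => ?_⟩
        rw [c.p'_balanced, F2, c.p'_right]
      · exact ⟨0, fun m => by rw [MA_p'_zl, zero_mul]⟩
      · rintro a b ⟨w₁, h₁⟩ ⟨w₂, h₂⟩
        exact ⟨w₁ + w₂, fun m => by rw [c.p'_add_left, h₁, h₂, add_mul]⟩
      · rintro a ⟨w, h⟩
        exact ⟨-w, fun m => by rw [MA_p'_nl, h, neg_mul]⟩
    obtain ⟨w, hw⟩ := hex
    refine ⟨w, hw, fun y hy => ?_⟩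
    refine sub_eq_zero.mp (fM' _ (fun m => ?_))
    rw [sub_eq_add_neg, c.p'_add_left, MA_p'_nl, hy, hw]
    abel
  choose ε hεc using hε
  have εdef : ∀ r' m, c.p' (ε r') m = r' * ψ'i m := fun r' => (hεc r').1
  have εuniq : ∀ (r' : R') (w : M'), (∀ m, c.p' w m = r' * ψ'i m) → w = ε r' :=
    fun r' => (hεc r').2
  have εadd : ∀ a b, ε (a + b) = ε a + ε b := fun a b =>
    (εuniq _ _ (fun m => by rw [c.p'_add_left, εdef, εdef, add_mul])).symm
  -- key identities
  have A1 : ∀ m' r, γ (c.sMR' m' r) = γ m' * r := fun m' r =>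
    (γuniq _ _ (fun s => by rw [← mul_assoc, γdef, ← c.p_right])).symm
  have A2 : ∀ r' m', γ (c.sRM' r' m') = c.p (ψ' r') m' := fun r' m' =>
    (γuniq _ _ (fun s => by rw [← c.p_left, ← hcomp, c.p_balanced])).symm
  have A3 : ∀ m' m, c.sRM (γ m') m = ψ' (c.p' m' m) := by
    intro m' m
    refine sub_eq_zero.mp (fMl _ (fun s => ?_))
    rw [sub_eq_add_neg, c.sRM_add_right, MA_sRM_nr, ← c.sRM_mul, γdef, c.assoc₁, hcomp]
    abel
  have κgen : ∀ n' r, κ (c.sMR' n' r) = c.p' n' (ψ r) := fun n' r =>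
    (κuniq _ _ (fun s' => by rw [← c.p'_right, hcomp, ← c.p'_balanced])).symm
  have B4 : ∀ r' m', κ (c.sRM' r' m') = r' * κ m' := fun r' m' =>
    (κuniq _ _ (fun s' => by rw [mul_assoc, κdef, ← c.p'_left])).symm
  have B2 : ∀ (m' : M') (m : M), ψ (c.p m m') = c.sMR m (κ m') := by
    refine MA_top_induction
      (P := fun m' => ∀ m, ψ (c.p m m') = c.sMR m (κ m')) hM'R ?_ ?_ ?_ ?_
    · rintro w ⟨n', r, rfl⟩ m
      rw [κgen, c.p_right, ψmul, c.assoc₁]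
    · intro m; rw [MA_p_zr, ψ0, κ0, MA_sMR_zr]
    · intro a b ha hb m; rw [c.p_add_right, ψadd, ha, hb, κadd, c.sMR_add_right]
    · intro a ha m; rw [MA_p_nr, ψneg, ha, κneg, MA_sMR_nr]
  have C3 : ∀ m' n', c.sRM' (κ m') n' = c.sMR' m' (γ n') := by
    intro m' n'
    refine sub_eq_zero.mp (fM' _ (fun m => ?_))
    rw [sub_eq_add_neg, c.p'_add_left, MA_p'_nl, c.p'_left, c.p'_balanced, A3, ← κdef]
    abel
  have γα : ∀ r, γ (α r) = r := by
    intro r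
    have pclaim : ∀ s, c.p (ψ s) (α r) = s * r := by
      intro s
      refine sub_eq_zero.mp (fRM _ (fun m₂ => ?_))
      rw [sub_eq_add_neg, c.sRM_add_left, MA_sRM_nl, c.assoc₁, αdef, hcomp, hψ'i2,
        ← c.sRM_mul]
      abel
    exact (γuniq _ r (fun s => (pclaim s).symm)).symm
  have αγ : ∀ m', α (γ m') = m' := fun m' =>
    (αuniq (γ m') m' (fun m => by rw [A3, hψ'i1])).symm
  have κε : ∀ r', κ (ε r') = r' := fun r' =>
    (κuniq (ε r') r' (fun s' => by rw [εdef, hψ'i1])).symm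
  have εκ : ∀ m', ε (κ m') = m' := fun m' =>
    (εuniq (κ m') m' (fun m => by rw [κdef, hψ'i2])).symm
  have D1 : ∀ r s, α (r * s) = c.sMR' (α r) s := fun r s =>
    (αuniq _ _ (fun m => by rw [c.p'_balanced, αdef, c.sRM_mul])).symm
  have D2 : ∀ m n', α (c.p m n') = c.sRM' (ψ'i m) n' := fun m n' =>
    (αuniq _ _ (fun m₂ => by rw [c.p'_left, c.assoc₁, ψ'i_sMR])).symm
  have E2' : ∀ m r', c.p m (ε r') = ψi (c.sMR m r') := by
    intro m r'
    apply hψ.1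
    rw [B2, κε, hψi2]
  have κα : ∀ r, κ (α r) = ψ'i (ψ r) := fun r =>
    (κuniq _ _ (fun s' => by rw [← ψ'i_sMR, hcomp, ← αdef])).symm
  have F1' : ∀ m r, c.p m (α r) = ψi m * r := by
    intro m r
    apply hψ.1
    rw [B2, κα, ψmul, F2]
  have E3 : ∀ m' m, ε (c.p' m' m) = c.sMR' m' (ψi m) := fun m' m =>
    (εuniq _ _ (fun m₂ => by rw [c.p'_balanced, F2, c.p'_right])).symm
  have E4 : ∀ r' s', ε (r' * s') = c.sRM' r' (ε s') := fun r' s' =>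
    (εuniq _ _ (fun m => by rw [c.p'_left, εdef, mul_assoc])).symm
  have F3 : ∀ r' r, c.sMR' (ε r') r = c.sRM' r' (α r) := by
    intro r' r
    refine sub_eq_zero.mp (fM' _ (fun m => ?_))
    rw [sub_eq_add_neg, c.p'_add_left, MA_p'_nl, c.p'_balanced, εdef, c.p'_left, αdef]
    abel
  -- assemble the multipliers
  refine ⟨⟨fun x => (γ x.2.2.1, ψ' x.2.2.2, 0, 0), fun x => (0, ψ x.1, 0, κ x.2.2.1),
      ?_, ?_, ?_, ?_, ?_⟩,
    ⟨fun x => (0, 0, α x.1, ψ'i x.2.1), fun x => (ψi x.2.1, 0, ε x.2.2.2, 0),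
      ?_, ?_, ?_, ?_, ?_⟩, ?_, ?_, ?_, ?_⟩
  · intro x y
    simp only [Prod.fst_add, Prod.snd_add, Prod.mk_add_mk, Prod.mk.injEq]
    exact ⟨γadd _ _, ψ'add _ _, (add_zero 0).symm, (add_zero 0).symm⟩
  · intro x y
    simp only [Prod.fst_add, Prod.snd_add, Prod.mk_add_mk, Prod.mk.injEq]
    exact ⟨(add_zero 0).symm, ψadd _ _, (add_zero 0).symm, κadd _ _⟩
  · intro x y
    simp only [lmul, Prod.mk.injEq]
    refine ⟨?_, ?_, ?_, ?_⟩
    · rw [γadd, A1, A2]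
    · rw [ψ'add, ← A3, ψ'mul]
    · rw [MA_sMR'_zl, MA_sRM'_zl, add_zero]
    · rw [MA_p'_zl, zero_mul, add_zero]
  · intro x y
    simp only [lmul, Prod.mk.injEq]
    refine ⟨?_, ?_, ?_, ?_⟩
    · rw [mul_zero, MA_p_zr, add_zero]
    · rw [ψadd, ψmul, B2]
    · rw [MA_sMR'_zr, MA_sRM'_zr, add_zero]
    · rw [κadd, κgen, B4]
  · intro x y
    simp only [lmul, Prod.mk.injEq]
    refine ⟨?_, ?_, ?_, ?_⟩
    · rw [zero_mul, zero_add, γdef, MA_p_zr, add_zero]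
    · rw [MA_sRM_zl, zero_add, hcomp, MA_sMR_zr, add_zero]
    · rw [MA_sMR'_zl, zero_add, C3, MA_sRM'_zr, add_zero]
    · rw [MA_p'_zl, zero_add, κdef, mul_zero, add_zero]
  · intro x y
    simp only [Prod.fst_add, Prod.snd_add, Prod.mk_add_mk, Prod.mk.injEq]
    exact ⟨(add_zero 0).symm, (add_zero 0).symm, αadd _ _, ψ'iadd _ _⟩
  · intro x y
    simp only [Prod.fst_add, Prod.snd_add, Prod.mk_add_mk, Prod.mk.injEq]
    exact ⟨ψiadd _ _, (add_zero 0).symm, εadd _ _, (add_zero 0).symm⟩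
  · intro x y
    simp only [lmul, Prod.mk.injEq]
    refine ⟨?_, ?_, ?_, ?_⟩
    · rw [MA_p_zl, zero_mul, add_zero]
    · rw [MA_sRM_zl, MA_sMR_zl, add_zero]
    · rw [αadd, D1, D2]
    · rw [ψ'iadd, αdef, ψ'i_sMR]
  · intro x y
    simp only [lmul, Prod.mk.injEq]
    refine ⟨?_, ?_, ?_, ?_⟩
    · rw [ψiadd, ψi_sRM, E2']
    · rw [MA_sRM_zr, MA_sMR_zr, add_zero]
    · rw [εadd, E3, E4]
    · rw [MA_p'_zr, mul_zero, add_zero]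
  · intro x y
    simp only [lmul, Prod.mk.injEq]
    refine ⟨?_, ?_, ?_, ?_⟩
    · rw [MA_p_zl, add_zero, mul_zero, zero_add, F1']
    · rw [MA_sMR_zl, add_zero, MA_sRM_zr, zero_add, F2]
    · rw [MA_sRM'_zl, add_zero, MA_sMR'_zr, zero_add, F3]
    · rw [zero_mul, add_zero, MA_p'_zr, zero_add, εdef]
  · intro x
    simp only [e11L, Prod.mk.injEq, and_true, true_and]
    exact ⟨γα _, hψ'i2 _⟩
  · intro x
    simp only [e11R, Prod.mk.injEq, and_true, true_and]
    exact ⟨hψi1 _, εκ _⟩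
  · intro x
    simp only [e22L, Prod.mk.injEq, and_true, true_and]
    exact ⟨αγ _, hψ'i1 _⟩
  · intro x
    simp only [e22R, Prod.mk.injEq, and_true, true_and]
    exact ⟨hψi2 _, κε _⟩

end Reverse

section Forward

theorem MA_prod_ext {A B C D : Type} {x y : A × B × C × D}
    (h1 : x.1 = y.1) (h2 : x.2.1 = y.2.1) (h3 : x.2.2.1 = y.2.2.1)
    (h4 : x.2.2.2 = y.2.2.2) : x = y := by
  obtain ⟨a, b, cc, d⟩ := x
  obtain ⟨a', b', c', d'⟩ := y
  simp only [] at h1 h2 h3 h4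
  subst h1; subst h2; subst h3; subst h4; rfl

variable (c : MoritaContext R R' M M')

theorem MA_e11L_mul (x y : R × M × M' × R') :
    e11L (lmul c x y) = lmul c (e11L x) y := by
  simp [lmul, e11L, MA_sRM_zl, MA_sRM_zr, MA_sMR_zl, MA_sMR_zr, MA_sRM'_zl, MA_sRM'_zr,
    MA_sMR'_zl, MA_sMR'_zr, MA_p_zl, MA_p_zr, MA_p'_zl, MA_p'_zr]

theorem MA_e11R_mul (x y : R × M × M' × R') :
    e11R (lmul c x y) = lmul c x (e11R y) := by
  simp [lmul, e11R, MA_sRM_zl, MA_sRM_zr, MA_sMR_zl, MA_sMR_zr, MA_sRM'_zl, MA_sRM'_zr,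
    MA_sMR'_zl, MA_sMR'_zr, MA_p_zl, MA_p_zr, MA_p'_zl, MA_p'_zr]

theorem MA_e11_compat (x y : R × M × M' × R') :
    lmul c (e11R x) y = lmul c x (e11L y) := by
  simp [lmul, e11R, e11L, MA_sRM_zl, MA_sRM_zr, MA_sMR_zl, MA_sMR_zr, MA_sRM'_zl,
    MA_sRM'_zr, MA_sMR'_zl, MA_sMR'_zr, MA_p_zl, MA_p_zr, MA_p'_zl, MA_p'_zr]

theorem MA_e22L_mul (x y : R × M × M' × R') :
    e22L (lmul c x y) = lmul c (e22L x) y := by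
  simp [lmul, e22L, MA_sRM_zl, MA_sRM_zr, MA_sMR_zl, MA_sMR_zr, MA_sRM'_zl, MA_sRM'_zr,
    MA_sMR'_zl, MA_sMR'_zr, MA_p_zl, MA_p_zr, MA_p'_zl, MA_p'_zr]

theorem MA_e22R_mul (x y : R × M × M' × R') :
    e22R (lmul c x y) = lmul c x (e22R y) := by
  simp [lmul, e22R, MA_sRM_zl, MA_sRM_zr, MA_sMR_zl, MA_sMR_zr, MA_sRM'_zl, MA_sRM'_zr,
    MA_sMR'_zl, MA_sMR'_zr, MA_p_zl, MA_p_zr, MA_p'_zl, MA_p'_zr]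

theorem MA_e22_compat (x y : R × M × M' × R') :
    lmul c (e22R x) y = lmul c x (e22L y) := by
  simp [lmul, e22R, e22L, MA_sRM_zl, MA_sRM_zr, MA_sMR_zl, MA_sMR_zr, MA_sRM'_zl,
    MA_sRM'_zr, MA_sMR'_zl, MA_sMR'_zr, MA_p_zl, MA_p_zr, MA_p'_zl, MA_p'_zr]

theorem MA_e11L_add (x y : R × M × M' × R') : e11L (x + y) = e11L x + e11L y := by
  simp [e11L, Prod.ext_iff]

theorem MA_e11R_add (x y : R × M × M' × R') : e11R (x + y) = e11R x + e11R y := by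
  simp [e11R, Prod.ext_iff]

theorem MA_e22L_add (x y : R × M × M' × R') : e22L (x + y) = e22L x + e22L y := by
  simp [e22L, Prod.ext_iff]

theorem MA_e22R_add (x y : R × M × M' × R') : e22R (x + y) = e22R x + e22R y := by
  simp [e22R, Prod.ext_iff]

theorem MA_forward_pure (c : MoritaContext R R' M M')
    (hRl : ∀ r : R, ∃ y : R, y * r = r) (hR'l : ∀ r' : R', ∃ y : R', y * r' = r')
    (hRM : AddSubgroup.closure {x : M | ∃ r m, x = c.sRM r m} = ⊤)
    (UL URm VL VRm : R × M × M' × R' → R × M × M' × R')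
    (ULadd : ∀ x y, UL (x + y) = UL x + UL y)
    (URmadd : ∀ x y, URm (x + y) = URm x + URm y)
    (VLadd : ∀ x y, VL (x + y) = VL x + VL y)
    (VRmadd : ∀ x y, VRm (x + y) = VRm x + VRm y)
    (ULmul : ∀ x y, UL (lmul c x y) = lmul c (UL x) y)
    (URmmul : ∀ x y, URm (lmul c x y) = lmul c x (URm y))
    (VLmul : ∀ x y, VL (lmul c x y) = lmul c (VL x) y)
    (VRmmul : ∀ x y, VRm (lmul c x y) = lmul c x (VRm y))
    (Ucompat : ∀ x y, lmul c (URm x) y = lmul c x (UL y))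
    (hUV1 : ∀ x, UL (VL x) = e11L x) (hUV2 : ∀ x, VRm (URm x) = e11R x)
    (hUV3 : ∀ x, VL (UL x) = e22L x) (hUV4 : ∀ x, URm (VRm x) = e22R x)
    (hURm1 : ∀ x, (URm x).1 = 0) (hURm3 : ∀ x, (URm x).2.2.1 = 0)
    (hUL3 : ∀ x, (UL x).2.2.1 = 0) (hUL4 : ∀ x, (UL x).2.2.2 = 0)
    (hVRm2 : ∀ x, (VRm x).2.1 = 0) (hVRm4 : ∀ x, (VRm x).2.2.2 = 0)
    (hVL1 : ∀ x, (VL x).1 = 0) (hVL2 : ∀ x, (VL x).2.1 = 0) :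
    (∃ (ψ : R → M) (ψ' : R' → M),
      Function.Bijective ψ ∧ Function.Bijective ψ' ∧
      (∀ r s : R, ψ (r + s) = ψ r + ψ s) ∧
      (∀ r' s' : R', ψ' (r' + s') = ψ' r' + ψ' s') ∧
      (∀ r s : R, ψ (r * s) = c.sRM r (ψ s)) ∧
      (∀ r' s' : R', ψ' (r' * s') = c.sMR (ψ' r') s') ∧
      (∀ (r : R) (r' : R'), c.sMR (ψ r) r' = c.sRM r (ψ' r'))) := by
  -- shape lemmas
  have SU : ∀ r : R, URm (r, (0:M), (0:M'), (0:R')) =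
      (0, (URm (r, 0, 0, 0)).2.1, 0, 0) := by
    intro r
    obtain ⟨y, hy⟩ := hRl r
    have hid : lmul c (y, (0:M), (0:M'), (0:R')) (r, 0, 0, 0) = (r, 0, 0, 0) := by
      simp [lmul, hy, MA_sRM_zl, MA_sRM_zr, MA_sMR_zl, MA_sMR_zr, MA_sRM'_zl, MA_sRM'_zr,
        MA_sMR'_zl, MA_sMR'_zr, MA_p_zl, MA_p_zr, MA_p'_zl, MA_p'_zr]
    have h2 : URm (r, (0:M), (0:M'), (0:R')) =
        lmul c (y, (0:M), (0:M'), (0:R')) (URm (r, 0, 0, 0)) := by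
      conv_lhs => rw [← hid]
      rw [URmmul]
    have h4 : (URm (r, (0:M), (0:M'), (0:R'))).2.2.2 = 0 := by
      rw [h2]
      simp [lmul, MA_p'_zl]
    exact MA_prod_ext (hURm1 _) rfl (hURm3 _) h4
  have SUL : ∀ r' : R', UL ((0:R), (0:M), (0:M'), r') =
      (0, (UL (0, 0, 0, r')).2.1, 0, 0) := by
    intro r'
    obtain ⟨y', hy'⟩ := hR'l r'
    have hid : lmul c ((0:R), (0:M), (0:M'), y') (0, 0, 0, r') = (0, 0, 0, r') := by
      simp [lmul, hy', MA_sRM_zl, MA_sRM_zr, MA_sMR_zl, MA_sMR_zr, MA_sRM'_zl, MA_sRM'_zr,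
        MA_sMR'_zl, MA_sMR'_zr, MA_p_zl, MA_p_zr, MA_p'_zl, MA_p'_zr]
    have h2 : UL ((0:R), (0:M), (0:M'), r') =
        lmul c (UL ((0:R), (0:M), (0:M'), y')) (0, 0, 0, r') := by
      conv_lhs => rw [← hid]
      rw [ULmul]
    have h1 : (UL ((0:R), (0:M), (0:M'), r')).1 = 0 := by
      rw [h2]
      simp [lmul, MA_p_zr]
    exact MA_prod_ext h1 rfl (hUL3 _) (hUL4 _)
  have SVRm : ∀ m : M, VRm ((0:R), m, (0:M'), (0:R')) =
      ((VRm (0, m, 0, 0)).1, 0, 0, 0) := by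
    have h3 : ∀ m : M, (VRm ((0:R), m, (0:M'), (0:R'))).2.2.1 = 0 := by
      refine MA_top_induction
        (P := fun m => (VRm ((0:R), m, (0:M'), (0:R'))).2.2.1 = 0) hRM ?_ ?_ ?_ ?_
      · rintro z ⟨r, m₂, rfl⟩
        have hid : lmul c (r, (0:M), (0:M'), (0:R')) ((0:R), m₂, (0:M'), (0:R')) =
            ((0:R), c.sRM r m₂, (0:M'), (0:R')) := by
          simp [lmul, MA_sRM_zl, MA_sRM_zr, MA_sMR_zl, MA_sMR_zr, MA_sRM'_zl, MA_sRM'_zr,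
            MA_sMR'_zl, MA_sMR'_zr, MA_p_zl, MA_p_zr, MA_p'_zl, MA_p'_zr]
        rw [← hid, VRmmul]
        simp [lmul, MA_sMR'_zl, MA_sRM'_zl]
      · show (VRm 0).2.2.1 = 0
        rw [MA_addf_zero VRmadd]
        rfl
      · intro a b ha hb
        have hsplit : ((0:R), a + b, (0:M'), (0:R')) =
            ((0:R), a, (0:M'), (0:R')) + ((0:R), b, (0:M'), (0:R')) := by simp
        rw [hsplit, VRmadd]
        simp only [Prod.fst_add, Prod.snd_add]
        rw [ha, hb, add_zero]
      · intro a ha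
        have hsplit : ((0:R), -a, (0:M'), (0:R')) = -((0:R), a, (0:M'), (0:R')) := by simp
        rw [hsplit, MA_addf_neg VRmadd]
        simp only [Prod.fst_neg, Prod.snd_neg]
        rw [ha, neg_zero]
    intro m
    exact MA_prod_ext rfl (hVRm2 _) (h3 m) (hVRm4 _)
  have SVL : ∀ m : M, VL ((0:R), m, (0:M'), (0:R')) =
      (0, 0, 0, (VL (0, m, 0, 0)).2.2.2) := by
    have h3 : ∀ m : M, (VL ((0:R), m, (0:M'), (0:R'))).2.2.1 = 0 := by
      refine MA_top_induction
        (P := fun m => (VL ((0:R), m, (0:M'), (0:R'))).2.2.1 = 0) hRM ?_ ?_ ?_ ?_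
      · rintro z ⟨r, m₂, rfl⟩
        have hid : lmul c (r, (0:M), (0:M'), (0:R')) ((0:R), m₂, (0:M'), (0:R')) =
            ((0:R), c.sRM r m₂, (0:M'), (0:R')) := by
          simp [lmul, MA_sRM_zl, MA_sRM_zr, MA_sMR_zl, MA_sMR_zr, MA_sRM'_zl, MA_sRM'_zr,
            MA_sMR'_zl, MA_sMR'_zr, MA_p_zl, MA_p_zr, MA_p'_zl, MA_p'_zr]
        rw [← hid, VLmul]
        simp [lmul, MA_sMR'_zr, MA_sRM'_zr]
      · show (VL 0).2.2.1 = 0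
        rw [MA_addf_zero VLadd]
        rfl
      · intro a b ha hb
        have hsplit : ((0:R), a + b, (0:M'), (0:R')) =
            ((0:R), a, (0:M'), (0:R')) + ((0:R), b, (0:M'), (0:R')) := by simp
        rw [hsplit, VLadd]
        simp only [Prod.fst_add, Prod.snd_add]
        rw [ha, hb, add_zero]
      · intro a ha
        have hsplit : ((0:R), -a, (0:M'), (0:R')) = -((0:R), a, (0:M'), (0:R')) := by simp
        rw [hsplit, MA_addf_neg VLadd]
        simp only [Prod.fst_neg, Prod.snd_neg]
        rw [ha, neg_zero]
    intro m
    exact MA_prod_ext (hVL1 _) (hVL2 _) (h3 m) rfl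
  refine ⟨fun r => (URm (r, 0, 0, 0)).2.1, fun r' => (UL (0, 0, 0, r')).2.1,
    ?_, ?_, ?_, ?_, ?_, ?_, ?_⟩
  · refine Function.bijective_iff_has_inverse.mpr
      ⟨fun m => (VRm (0, m, 0, 0)).1, ?_, ?_⟩
    · intro r
      have h := hUV2 (r, (0:M), (0:M'), (0:R'))
      rw [SU r] at h
      exact congrArg (fun z => z.1) h
    · intro m
      have h := hUV4 ((0:R), m, (0:M'), (0:R'))
      rw [SVRm m] at h
      exact congrArg (fun z => z.2.1) h
  · refine Function.bijective_iff_has_inverse.mpr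
      ⟨fun m => (VL (0, m, 0, 0)).2.2.2, ?_, ?_⟩
    · intro r'
      have h := hUV3 ((0:R), (0:M), (0:M'), r')
      rw [SUL r'] at h
      exact congrArg (fun z => z.2.2.2) h
    · intro m
      have h := hUV1 ((0:R), m, (0:M'), (0:R'))
      rw [SVL m] at h
      exact congrArg (fun z => z.2.1) h
  · intro r s
    have hsplit : ((r + s : R), (0:M), (0:M'), (0:R')) =
        (r, (0:M), (0:M'), (0:R')) + (s, (0:M), (0:M'), (0:R')) := by simp
    show (URm ((r + s : R), (0:M), (0:M'), (0:R'))).2.1 = _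
    rw [hsplit, URmadd]
    simp [Prod.fst_add, Prod.snd_add]
  · intro r' s'
    have hsplit : ((0:R), (0:M), (0:M'), r' + s') =
        ((0:R), (0:M), (0:M'), r') + ((0:R), (0:M), (0:M'), s') := by simp
    show (UL ((0:R), (0:M), (0:M'), r' + s')).2.1 = _
    rw [hsplit, ULadd]
    simp [Prod.fst_add, Prod.snd_add]
  · intro r s
    have hid : lmul c (r, (0:M), (0:M'), (0:R')) (s, (0:M), (0:M'), (0:R')) =
        ((r * s : R), (0:M), (0:M'), (0:R')) := by
      simp [lmul, MA_sRM_zl, MA_sRM_zr, MA_sMR_zl, MA_sMR_zr, MA_sRM'_zl, MA_sRM'_zr,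
        MA_sMR'_zl, MA_sMR'_zr, MA_p_zl, MA_p_zr, MA_p'_zl, MA_p'_zr]
    have h := URmmul (r, (0:M), (0:M'), (0:R')) (s, (0:M), (0:M'), (0:R'))
    rw [hid, SU s] at h
    have h2 := congrArg (fun z => z.2.1) h
    simpa [lmul, MA_sMR_zl] using h2
  · intro r' s'
    have hid : lmul c ((0:R), (0:M), (0:M'), r') ((0:R), (0:M), (0:M'), s') =
        ((0:R), (0:M), (0:M'), r' * s') := by
      simp [lmul, MA_sRM_zl, MA_sRM_zr, MA_sMR_zl, MA_sMR_zr, MA_sRM'_zl, MA_sRM'_zr,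
        MA_sMR'_zl, MA_sMR'_zr, MA_p_zl, MA_p_zr, MA_p'_zl, MA_p'_zr]
    have h := ULmul ((0:R), (0:M), (0:M'), r') ((0:R), (0:M), (0:M'), s')
    rw [hid, SUL r'] at h
    have h2 := congrArg (fun z => z.2.1) h
    simpa [lmul, MA_sRM_zl] using h2
  · intro r r'
    have h := Ucompat (r, (0:M), (0:M'), (0:R')) ((0:R), (0:M), (0:M'), r')
    rw [SU r, SUL r'] at h
    have h2 := congrArg (fun z => z.2.1) h
    simpa [lmul, MA_sRM_zl, MA_sMR_zl, MA_sMR_zr] using h2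

end Forward

theorem MA_forward (c : MoritaContext R R' M M')
    (hRl : ∀ r : R, ∃ y : R, y * r = r) (hR'l : ∀ r' : R', ∃ y : R', y * r' = r')
    (hRM : AddSubgroup.closure {x : M | ∃ r m, x = c.sRM r m} = ⊤)
    (u v : CMult c) (huv : CornerUV c u v) :
    (∃ (ψ : R → M) (ψ' : R' → M),
      Function.Bijective ψ ∧ Function.Bijective ψ' ∧
      (∀ r s : R, ψ (r + s) = ψ r + ψ s) ∧
      (∀ r' s' : R', ψ' (r' + s') = ψ' r' + ψ' s') ∧
      (∀ r s : R, ψ (r * s) = c.sRM r (ψ s)) ∧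
      (∀ r' s' : R', ψ' (r' * s') = c.sMR (ψ' r') s') ∧
      (∀ (r : R) (r' : R'), c.sMR (ψ r) r' = c.sRM r (ψ' r'))) := by
  obtain ⟨huv1, huv2, huv3, huv4⟩ := huv
  have hswap1 : ∀ z, e22L (v.L z) = v.L (e11L z) := by
    intro z; rw [← huv3 (v.L z), huv1 z]
  have hswap2 : ∀ z, e11L (u.L z) = u.L (e22L z) := by
    intro z; rw [← huv1 (u.L z), huv3 z]
  have hswap3 : ∀ z, e22R (u.Rm z) = u.Rm (e11R z) := by
    intro z; rw [← huv4 (u.Rm z), huv2 z]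
  have hswap4 : ∀ z, e11R (v.Rm z) = v.Rm (e22R z) := by
    intro z; rw [← huv2 (v.Rm z), huv4 z]
  refine MA_forward_pure c hRl hR'l hRM
    (fun x => e11L (u.L (e22L x))) (fun x => e22R (u.Rm (e11R x)))
    (fun x => e22L (v.L (e11L x))) (fun x => e11R (v.Rm (e22R x)))
    ?_ ?_ ?_ ?_ ?_ ?_ ?_ ?_ ?_ ?_ ?_ ?_ ?_ ?_ ?_ ?_ ?_ ?_ ?_ ?_ ?_
  · intro x y; simp only [MA_e22L_add, u.L_add, MA_e11L_add]
  · intro x y; simp only [MA_e11R_add, u.R_add, MA_e22R_add]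
  · intro x y; simp only [MA_e11L_add, v.L_add, MA_e22L_add]
  · intro x y; simp only [MA_e22R_add, v.R_add, MA_e11R_add]
  · intro x y; simp only [MA_e22L_mul, u.L_mul, MA_e11L_mul]
  · intro x y; simp only [MA_e11R_mul, u.R_mul, MA_e22R_mul]
  · intro x y; simp only [MA_e11L_mul, v.L_mul, MA_e22L_mul]
  · intro x y; simp only [MA_e22R_mul, v.R_mul, MA_e11R_mul]
  · intro x y; simp only [MA_e22_compat, u.compat, MA_e11_compat]
  · intro x
    show e11L (u.L (e22L (v.L (e11L x)))) = e11L x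
    rw [hswap1, huv1]; rfl
  · intro x
    show e11R (v.Rm (e22R (u.Rm (e11R x)))) = e11R x
    rw [hswap3, huv2]; rfl
  · intro x
    show e22L (v.L (e11L (u.L (e22L x)))) = e22L x
    rw [hswap2, huv3]; rfl
  · intro x
    show e22R (u.Rm (e11R (v.Rm (e22R x)))) = e22R x
    rw [hswap4, huv4]; rfl
  · intro x; rfl
  · intro x; rfl
  · intro x; rfl
  · intro x; rfl
  · intro x; rfl
  · intro x; rfl
  · intro x; rfl
  · intro x; rfl
/-- STATEMENT 15, Proposition 6.2: for a Morita context with `s`-unital rings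
`R`, `R'`, surjective `τ`, `τ'`, `M'R = R'M' = M'` and `MR' = RM = M`, the
linking algebra has multipliers `u, v` with `uv = e₁₁`, `vu = e₂₂` if and only
if there exist a left `R`-module isomorphism `ψ : R → M` and a right
`R'`-module isomorphism `ψ' : R' → M` with `(rψ)r' = r(ψ'r')` for all
`r ∈ R`, `r' ∈ R'`. -/
theorem morita_uv_exist_iff (c : MoritaContext R R' M M')
    (hRl : ∀ r : R, ∃ y : R, y * r = r) (hRr : ∀ r : R, ∃ y : R, r * y = r)
    (hR'l : ∀ r' : R', ∃ y : R', y * r' = r') (hR'r : ∀ r' : R', ∃ y : R', r' * y = r')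
    (hτ : AddSubgroup.closure {x : R | ∃ m m', x = c.p m m'} = ⊤)
    (hτ' : AddSubgroup.closure {x : R' | ∃ m' m, x = c.p' m' m} = ⊤)
    (hM'R : AddSubgroup.closure {x : M' | ∃ m' r, x = c.sMR' m' r} = ⊤)
    (hR'M' : AddSubgroup.closure {x : M' | ∃ r' m', x = c.sRM' r' m'} = ⊤)
    (hMR' : AddSubgroup.closure {x : M | ∃ m r', x = c.sMR m r'} = ⊤)
    (hRM : AddSubgroup.closure {x : M | ∃ r m, x = c.sRM r m} = ⊤) :
    (∃ u v : CMult c, CornerUV c u v) ↔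
    (∃ (ψ : R → M) (ψ' : R' → M),
      Function.Bijective ψ ∧ Function.Bijective ψ' ∧
      (∀ r s : R, ψ (r + s) = ψ r + ψ s) ∧
      (∀ r' s' : R', ψ' (r' + s') = ψ' r' + ψ' s') ∧
      (∀ r s : R, ψ (r * s) = c.sRM r (ψ s)) ∧
      (∀ r' s' : R', ψ' (r' * s') = c.sMR (ψ' r') s') ∧
      (∀ (r : R) (r' : R'), c.sMR (ψ r) r' = c.sRM r (ψ' r'))) := by
  constructor
  · rintro ⟨u, v, huv⟩
    exact MA_forward c hRl hR'l hRM u v huv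
  · rintro ⟨ψ, ψ', hψ, hψ', ψadd, ψ'add, ψmul, ψ'mul, hcomp⟩
    exact MA_reverse c hRl hRr hR'r hτ hτ' hM'R hR'M' ψ ψ' hψ hψ' ψadd ψ'add ψmul ψ'mul hcomp
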